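/- Let p be a prime and O_p = Z[q]/(1 + q^2 + ... + q^{2(p-1)}). For each 1 ≤ n ≤ p−1, the balanced quantum integer [n] = q^{n-1} + q^{n-3} + ... + q^{1-n} (equivalently (q^n − q^{-n})/(q − q^{-1}), noting q is invertible in O_p) is a unit in O_p. -/

import Mathlib

open Polynomial

lemma geom_block {R : Type*} [CommRing R] (x : R) (a b : ℕ) :
    ∑ i ∈ Finset.range (a * b), x ^ i =
      (∑ i ∈ Finset.range a, x ^ i) * ∑ j ∈ Finset.range b, (x ^ a) ^ j := by
  induction b with
  | zero => simp
  | succ b ih =>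
    rw [Nat.mul_succ, Finset.sum_range_add, ih, Finset.sum_range_succ]
    have : ∑ i ∈ Finset.range a, x ^ (a * b + i)
        = (∑ i ∈ Finset.range a, x ^ i) * (x ^ a) ^ b := by
      rw [Finset.sum_mul]
      refine Finset.sum_congr rfl fun i _ => ?_
      rw [← pow_mul, ← pow_add, Nat.add_comm]
    rw [this]; ring

/-- In `𝕆_p = ℤ[q]/(1 + q^2 + ⋯ + q^{2(p-1)})`, the balanced quantum integer
`[n] = q^{n-1} + q^{n-3} + ⋯ + q^{1-n}` is a unit for `1 ≤ n ≤ p-1`.  Since `q^{2p} = 1`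
in `𝕆_p`, the balanced quantum integer equals `Σ_{t=0}^{n-1} q^{2p + n - 1 - 2t}`,
which is how it is written below with nonnegative exponents. -/
theorem stmt9 {p : ℕ} (hp : p.Prime) (n : ℕ) (h1 : 1 ≤ n) (h2 : n ≤ p - 1) :
    IsUnit (∑ t ∈ Finset.range n,
      (Ideal.Quotient.mk (Ideal.span {∑ i ∈ Finset.range p, (X : ℤ[X]) ^ (2 * i)})
          (X : ℤ[X])) ^ (2 * p + n - 1 - 2 * t)) := by
  have hp2 : 2 ≤ p := hp.two_le
  set I : Ideal ℤ[X] := Ideal.span {∑ i ∈ Finset.range p, (X : ℤ[X]) ^ (2 * i)} with hI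
  set q : ℤ[X] ⧸ I := Ideal.Quotient.mk I (X : ℤ[X]) with hq
  set ζ : ℤ[X] ⧸ I := q ^ 2 with hζ
  -- the defining relation
  have hS : ∑ i ∈ Finset.range p, ζ ^ i = 0 := by
    have : (Ideal.Quotient.mk I) (∑ i ∈ Finset.range p, (X : ℤ[X]) ^ (2 * i)) = 0 := by
      rw [Ideal.Quotient.eq_zero_iff_mem, hI]
      exact Ideal.subset_span rfl
    rw [map_sum] at this
    simpa [hζ, hq, ← pow_mul, ← map_pow] using this
  -- ζ^p = 1
  have hζp : ζ ^ p = 1 := by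
    have := geom_sum_mul ζ p
    rw [hS, zero_mul] at this
    exact sub_eq_zero.mp this.symm
  -- q is a unit
  have hqu : IsUnit q := by
    refine IsUnit.of_mul_eq_one (a := q) (q ^ (2 * p - 1)) ?_
    rw [← pow_succ']
    have : 2 * p - 1 + 1 = 2 * p := by omega
    rw [this, pow_mul, ← hζ, hζp]
  -- Fermat: n * n^(p-2) = 1 + k * p for some k
  have hcop : ¬ (p ∣ n) := fun h => by
    have := Nat.le_of_dvd (by omega) h; omega
  have hferm : n ^ (p - 1) % p = 1 := by
    have h1' : ((n : ZMod p)) ^ (p - 1) = 1 := by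
      haveI := Fact.mk hp
      apply ZMod.pow_card_sub_one_eq_one
      haveI : NeZero p := ⟨hp.pos.ne'⟩
      rw [Ne, ZMod.natCast_eq_zero_iff]
      exact hcop
    have : ((n ^ (p - 1) : ℕ) : ZMod p) = ((1 : ℕ) : ZMod p) := by push_cast; simpa using h1'
    have hmod := (ZMod.natCast_eq_natCast_iff _ _ _).mp this
    have := hmod.symm
    unfold Nat.ModEq at this
    rw [Nat.one_mod_eq_one.mpr (by omega)] at this
    omega
  set m : ℕ := n ^ (p - 2) with hm
  set k : ℕ := n ^ (p - 1) / p with hk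
  have hnm : n * m = 1 + p * k := by
    have h3 : n * m = n ^ (p - 1) := by
      rw [hm, ← pow_succ']
      congr 1; omega
    have hdm : p * (n ^ (p - 1) / p) + 1 = n ^ (p - 1) := by
      conv_rhs => rw [← Nat.div_add_mod (n ^ (p - 1)) p]
      rw [hferm]
    rw [h3, hk]
    exact hdm.symm.trans (Nat.add_comm _ _)
  -- the geometric sum ∑_{i<n} ζ^i is a unit
  have hSn : IsUnit (∑ i ∈ Finset.range n, ζ ^ i) := by
    refine IsUnit.of_mul_eq_one (∑ j ∈ Finset.range m, (ζ ^ n) ^ j) ?_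
    rw [← geom_block, hnm, Finset.sum_range_add]
    have hz : ∑ i ∈ Finset.range (p * k), ζ ^ (1 + i) = 0 := by
      have : ∑ i ∈ Finset.range (p * k), ζ ^ (1 + i)
          = ζ * ∑ i ∈ Finset.range (p * k), ζ ^ i := by
        rw [Finset.mul_sum]
        exact Finset.sum_congr rfl fun i _ => by rw [pow_add, pow_one]
      rw [this, geom_block, hS, zero_mul, mul_zero]
    rw [hz]; simp
  -- rewrite the goal sum
  have hgoal : ∑ t ∈ Finset.range n, q ^ (2 * p + n - 1 - 2 * t)
      = q ^ (2 * p - n + 1) * ∑ i ∈ Finset.range n, ζ ^ i := by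
    rw [← Finset.sum_range_reflect (fun i => ζ ^ i) n, Finset.mul_sum]
    refine Finset.sum_congr rfl fun t ht => ?_
    rw [Finset.mem_range] at ht
    rw [hζ, ← pow_mul, ← pow_add]
    congr 1
    omega
  rw [hgoal]
  exact (hqu.pow _).mul hSn
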